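/- Fix natural numbers n, t, r with 2t ≤ n. Let K = GF(2^{n−t}), L = GF(2^t), and let T : K → L be a surjective 𝔽₂-linear map. For a key (y_2, y_1) ∈ K × L, a message s' = (s'_r, …, s'_1) ∈ K^r, and a seed s = (s_2, s_1) ∈ K × L with s_2 ≠ 0, define mac((y_2,y_1), (s', s)) = T( s_2·y_2^{r+2} + Σ_{i=1}^r s'_i·y_2^i ) + y_1^3 + s_1·y_1 ∈ L. Let (X, Z) be jointly distributed random variables with X taking values in K × L and Z in a finite set 𝒵. Then for every message s'_f ∈ K^r, every seed s_f = (s_{2f}, s_{1f}) ∈ K × L with s_{2f} ≠ 0, and every tag t'_f ∈ L (impersonation attack): Σ_z Pr[Z=z] · Pr[ mac(X, (s'_f, s_f)) = t'_f | Z=z ] ≤ 3(r+2) · 2^{ −( t + H̃_∞(X|Z) − n ) }. -/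

import Mathlib

open Finset Real
open scoped Classical

/-- Average conditional min-entropy `H̃_∞(X|Z)` of a joint pmf `q` on `𝒳 × 𝒵`. -/
noncomputable def condMinEnt {𝒳 𝒵 : Type*} [Fintype 𝒳] [Fintype 𝒵] [Nonempty 𝒳]
    (q : 𝒳 → 𝒵 → ℝ) : ℝ :=
  - Real.logb 2 (∑ z ∈ Finset.univ.filter (fun z => 0 < ∑ x, q x z),
      (∑ x, q x z) *
        Finset.univ.sup' Finset.univ_nonempty (fun x => q x z / ∑ x', q x' z))

/-- The message authentication code
`mac((y₂,y₁),(s',s)) = T(s₂·y₂^{r+2} + Σ_{i=1}^r s'_i·y₂^i) + y₁³ + s₁·y₁`. -/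
noncomputable def mac {K L : Type*} [Field K] [Field L] (T : K → L) (r : ℕ)
    (key : K × L) (s' : Fin r → K) (s : K × L) : L :=
  T (s.1 * key.1 ^ (r + 2) + ∑ i : Fin r, s' i * key.1 ^ ((i : ℕ) + 1)) +
    key.2 ^ 3 + s.2 * key.2

lemma cubic_roots_card {L : Type*} [Field L] [Fintype L] (a c : L) :
    (Finset.univ.filter (fun y : L => y^3 + a*y + c = 0)).card ≤ 3 := by
  classical
  set q : Polynomial L := Polynomial.X^3 + Polynomial.C a * Polynomial.X + Polynomial.C c with hq
  have hdeg : q.natDegree = 3 := by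
    rw [hq]; compute_degree!
  have hq0 : q ≠ 0 := by
    intro h; rw [h] at hdeg; simp at hdeg
  have hsub : (Finset.univ.filter (fun y : L => y^3 + a*y + c = 0)) ⊆ q.roots.toFinset := by
    intro y hy
    simp only [Finset.mem_filter, Finset.mem_univ, true_and] at hy
    rw [Multiset.mem_toFinset, Polynomial.mem_roots hq0]
    simp [Polynomial.IsRoot, hq, hy]
  calc (Finset.univ.filter (fun y : L => y^3 + a*y + c = 0)).card
      ≤ q.roots.toFinset.card := Finset.card_le_card hsub
    _ ≤ Multiset.card q.roots := Multiset.toFinset_card_le _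
    _ ≤ q.natDegree := Polynomial.card_roots' q
    _ = 3 := hdeg

lemma fiber_card {K L : Type*} [Field K] [Fintype K] [Field L] [Fintype L]
    (T : K → L) (r : ℕ) (s'f : Fin r → K) (sf : K × L) (t'f : L) :
    ((Finset.univ.filter (fun xy : K × L => mac T r xy s'f sf = t'f)).card : ℕ)
      ≤ 3 * Fintype.card K := by
  classical
  set F := Finset.univ.filter (fun xy : K × L => mac T r xy s'f sf = t'f) with hF
  have hmaps : ∀ xy ∈ F, Prod.fst xy ∈ (Finset.univ : Finset K) := fun _ _ => Finset.mem_univ _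
  rw [Finset.card_eq_sum_card_fiberwise hmaps]
  have hbound : ∀ y2 : K, (F.filter (fun xy => xy.1 = y2)).card ≤ 3 := by
    intro y2
    set c : L := T (sf.1 * y2 ^ (r + 2) + ∑ i : Fin r, s'f i * y2 ^ ((i : ℕ) + 1)) - t'f with hc
    have hinj : ∀ xy ∈ F.filter (fun xy => xy.1 = y2),
        Prod.snd xy ∈ Finset.univ.filter (fun y : L => y^3 + sf.2*y + c = 0) := by
      intro xy hxy
      simp only [Finset.mem_filter, Finset.mem_univ, true_and, hF, mac] at hxy ⊢
      obtain ⟨h1, h2⟩ := hxy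
      subst h2
      replace h1 := (Finset.mem_filter.mp h1).2
      linear_combination h1
    have hinjOn : Set.InjOn Prod.snd (↑(F.filter (fun xy => xy.1 = y2)) : Set (K × L)) := by
      intro a ha b hb hab
      simp only [Finset.coe_filter, Set.mem_setOf_eq] at ha hb
      exact Prod.ext (ha.2.trans hb.2.symm) hab
    calc (F.filter (fun xy => xy.1 = y2)).card
        ≤ (Finset.univ.filter (fun y : L => y^3 + sf.2*y + c = 0)).card :=
          Finset.card_le_card_of_injOn Prod.snd hinj hinjOn
      _ ≤ 3 := cubic_roots_card _ _
  calc ∑ y2 : K, (F.filter (fun xy => xy.1 = y2)).card ≤ ∑ _y2 : K, 3 :=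
        Finset.sum_le_sum (fun y2 _ => hbound y2)
    _ = Fintype.card K * 3 := by simp [Finset.sum_const, Finset.card_univ, mul_comm]
    _ = 3 * Fintype.card K := by ring


/-- Impersonation-attack bound for the one-time MAC with a partially
leaked key: for any message `s'f`, seed `sf` (with nonzero first component) and tag
`t'f`, `Σ_z Pr[Z=z] · Pr[mac(X,(s'f,sf)) = t'f | Z=z] ≤ 3(r+2)·2^{−(t+H̃_∞(X|Z)−n)}`. -/
theorem mac_impersonation_bound
    {K L 𝒵 : Type*} [Field K] [Fintype K] [Field L] [Fintype L] [Fintype 𝒵]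
    (n t r : ℕ) (hnt : 2 * t ≤ n)
    (hK : Fintype.card K = 2 ^ (n - t)) (hL : Fintype.card L = 2 ^ t)
    (T : K → L) (hadd : ∀ u v : K, T (u + v) = T u + T v)
    (hsurj : Function.Surjective T)
    (p : K × L → 𝒵 → ℝ) (hp : ∀ xy z, 0 ≤ p xy z)
    (hsum : ∑ xy, ∑ z, p xy z = 1)
    (s'f : Fin r → K) (sf : K × L) (hs2f : sf.1 ≠ 0) (t'f : L) :
    ∑ z ∈ univ.filter (fun z => 0 < ∑ xy, p xy z),
        (∑ xy, p xy z) *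
          ((∑ xy ∈ univ.filter (fun xy => mac T r xy s'f sf = t'f), p xy z) /
            (∑ xy, p xy z))
      ≤ 3 * (r + 2) * (2:ℝ) ^ (-((t:ℝ) + condMinEnt p - (n:ℝ))) := by
  classical
  set F : Finset (K × L) := Finset.univ.filter (fun xy => mac T r xy s'f sf = t'f) with hF
  set sz : 𝒵 → ℝ := fun z => ∑ xy, p xy z with hsz
  set m : 𝒵 → ℝ := fun z =>
    Finset.univ.sup' Finset.univ_nonempty (fun xy : K × L => p xy z / ∑ xy', p xy' z) with hm
  set S : ℝ := ∑ z ∈ Finset.univ.filter (fun z => 0 < sz z), sz z * m z with hS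
  have hcm : condMinEnt p = - Real.logb 2 S := rfl
  have hsznn : ∀ z, 0 ≤ sz z := fun z => Finset.sum_nonneg (fun xy _ => hp xy z)
  have hmle : ∀ z xy, p xy z / sz z ≤ m z := fun z xy =>
    Finset.le_sup' (fun xy : K × L => p xy z / ∑ xy', p xy' z) (Finset.mem_univ xy)
  have hmnn : ∀ z, 0 ≤ m z := by
    intro z
    obtain ⟨xy⟩ : Nonempty (K × L) := inferInstance
    exact le_trans (div_nonneg (hp xy z) (hsznn z)) (hmle z xy)
  have hSpos : 0 < S := by
    have h1 : ∑ z, sz z = 1 := by rw [← hsum]; simp only [hsz]; exact Finset.sum_comm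
    have hz0 : ∃ z0, 0 < sz z0 := by
      by_contra h
      push_neg at h
      have h0 : ∑ z, sz z = 0 :=
        Finset.sum_eq_zero (fun z _ => le_antisymm (h z) (hsznn z))
      rw [h1] at h0; norm_num at h0
    obtain ⟨z0, hz0⟩ := hz0
    have hx0 : ∃ x0, 0 < p x0 z0 := by
      by_contra h
      push_neg at h
      have h0 : sz z0 = 0 :=
        Finset.sum_eq_zero (fun xy _ => le_antisymm (h xy) (hp xy z0))
      rw [h0] at hz0; norm_num at hz0
    obtain ⟨x0, hx0⟩ := hx0
    have hmz0 : 0 < m z0 := lt_of_lt_of_le (div_pos hx0 hz0) (hmle z0 x0)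
    have hz0mem : z0 ∈ Finset.univ.filter (fun z => 0 < sz z) := by
      simp only [Finset.mem_filter, Finset.mem_univ, true_and]; exact hz0
    rw [hS]
    refine lt_of_lt_of_le (mul_pos hz0 hmz0)
      (Finset.single_le_sum (f := fun z => sz z * m z) ?_ hz0mem)
    exact fun z _ => mul_nonneg (hsznn z) (hmnn z)
  -- step 1 : LHS ≤ F.card * S
  have hstep1 : ∑ z ∈ Finset.univ.filter (fun z => 0 < sz z),
      sz z * ((∑ xy ∈ F, p xy z) / sz z) ≤ (F.card : ℝ) * S := by
    rw [hS, Finset.mul_sum]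
    refine Finset.sum_le_sum ?_
    intro z hz
    simp only [Finset.mem_filter, Finset.mem_univ, true_and] at hz
    rw [mul_div_cancel₀ _ (ne_of_gt hz)]
    have hterm : ∀ xy ∈ F, p xy z ≤ m z * sz z := by
      intro xy _
      exact (div_le_iff₀ hz).mp (hmle z xy)
    calc ∑ xy ∈ F, p xy z ≤ ∑ _xy ∈ F, m z * sz z := Finset.sum_le_sum hterm
      _ = (F.card : ℝ) * (m z * sz z) := by rw [Finset.sum_const, nsmul_eq_mul]
      _ = (F.card : ℝ) * (sz z * m z) := by ring
  -- step 2 : F.card ≤ 3 * (r+2) * 2^(n-t)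
  have htn : t ≤ n := le_trans (Nat.le_mul_of_pos_left t (by norm_num)) hnt
  have hcard : (F.card : ℝ) ≤ 3 * ((r : ℝ) + 2) * (2:ℝ) ^ (n - t : ℕ) := by
    have h1 : F.card ≤ 3 * Fintype.card K := fiber_card T r s'f sf t'f
    have h2 : F.card ≤ 3 * (r + 2) * 2 ^ (n - t) := by
      rw [hK] at h1
      calc F.card ≤ 3 * 2 ^ (n - t) := h1
        _ ≤ 3 * (r + 2) * 2 ^ (n - t) := by
            have : (1:ℕ) ≤ r + 2 := by omega
            nlinarith [(Nat.pow_pos (show 0 < 2 by norm_num) : 0 < 2 ^ (n - t))]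
    calc (F.card : ℝ) ≤ ((3 * (r + 2) * 2 ^ (n - t) : ℕ) : ℝ) := Nat.cast_le.mpr h2
      _ = 3 * ((r : ℝ) + 2) * (2:ℝ) ^ (n - t : ℕ) := by push_cast; ring
  -- step 3 : rewrite RHS
  have hrhs : 3 * ((r:ℝ) + 2) * (2:ℝ) ^ (-((t:ℝ) + condMinEnt p - (n:ℝ)))
      = 3 * ((r:ℝ) + 2) * ((2:ℝ) ^ (n - t : ℕ) * S) := by
    have hexp : -((t:ℝ) + condMinEnt p - (n:ℝ)) = ((n - t : ℕ) : ℝ) + Real.logb 2 S := by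
      rw [hcm]
      have : ((n - t : ℕ) : ℝ) = (n:ℝ) - (t:ℝ) := by
        rw [Nat.cast_sub htn]
      rw [this]; ring
    rw [hexp, Real.rpow_add (by norm_num : (0:ℝ) < 2),
      Real.rpow_natCast, Real.rpow_logb (by norm_num) (by norm_num) hSpos]
  calc ∑ z ∈ Finset.univ.filter (fun z => 0 < sz z),
        sz z * ((∑ xy ∈ F, p xy z) / sz z) ≤ (F.card : ℝ) * S := hstep1
    _ ≤ (3 * ((r : ℝ) + 2) * (2:ℝ) ^ (n - t : ℕ)) * S :=
        mul_le_mul_of_nonneg_right hcard hSpos.le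
    _ = 3 * ((r:ℝ) + 2) * ((2:ℝ) ^ (n - t : ℕ) * S) := by ring
    _ = 3 * ((r:ℝ) + 2) * (2:ℝ) ^ (-((t:ℝ) + condMinEnt p - (n:ℝ))) := hrhs.symm
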